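/- If binary operations * and • on a set X both have the orientation property (x * y ∈ {x, y} and x • y ∈ {x, y} for all x, y in X), then their product □, defined by x □ y := (x * y) • (y * x), also has the orientation property; hence the groupoids with the orientation property form a subsemigroup of (Bin(X), □). -/
import Mathlib

/-- The product of two binary operations on `X`:
`x □ y := (x * y) • (y * x)` where `f` plays the role of `*` and `g` of `•`. -/
def box {X : Type*} (f g : X → X → X) : X → X → X :=
  fun x y => g (f x y) (f y x)

/-- A binary operation has the orientation property if `x * y ∈ {x, y}` for all `x, y`. -/
def OrientationProperty {X : Type*} (f : X → X → X) : Prop :=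
  ∀ x y : X, f x y ∈ ({x, y} : Set X)

/-- If `*` and `•` both have the orientation property, so does their product `□`. -/
theorem box_orientationProperty {X : Type*} (f g : X → X → X)
    (hf : OrientationProperty f) (hg : OrientationProperty g) :
    OrientationProperty (box f g) := by
  intro x y
  have h1 := hf x y
  have h2 := hf y x
  have h3 := hg (f x y) (f y x)
  simp only [Set.mem_insert_iff, Set.mem_singleton_iff] at *
  unfold box
  rcases h3 with h | h <;> rw [h] <;> tauto
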